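/- arXiv:1009.5403 — 2 statements merged into one kernel-verified Lean document; each statement's English description precedes it below -/
import Mathlib

section
/- Suppose p : [0,∞) → (0,1] is log-concave with p(0)=1, and l : (0,∞) → (0,∞) is differentiable with x·l'(x) < l(x) for all x > 0. Fix A > 0 and define t_A(x) = (A/x − 1)·l(x), f_A(x) = A / t_A(x) for x ∈ (0,A), and s_A(x) = p(x)^{A/x}. Then s_A ∘ f_A⁻¹ is a non-increasing function of the average rate r̄ = f_A(x): i.e., if f_A(x₁) ≤ f_A(x₂) then s_A(x₁) ≥ s_A(x₂). -/
theorem stmt_7 (p : ℝ → ℝ) (hp0 : p 0 = 1)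
    (hppos : ∀ x ≥ 0, 0 < p x) (hple : ∀ x ≥ 0, p x ≤ 1)
    (hconc : ConcaveOn ℝ (Set.Ici 0) (fun x => Real.log (p x)))
    (l l' : ℝ → ℝ) (hl : ∀ x > 0, HasDerivAt l (l' x) x)
    (hlpos : ∀ x > 0, 0 < l x) (hinel : ∀ x > 0, x * l' x < l x)
    (A : ℝ) (hA : 0 < A) :
    ∀ x₁ ∈ Set.Ioo 0 A, ∀ x₂ ∈ Set.Ioo 0 A,
      A / ((A / x₁ - 1) * l x₁) ≤ A / ((A / x₂ - 1) * l x₂) →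
      p x₂ ^ (A / x₂) ≤ p x₁ ^ (A / x₁) := by
  intro x₁ hx₁ x₂ hx₂ hf
  obtain ⟨hx₁0, hx₁A⟩ := hx₁
  obtain ⟨hx₂0, hx₂A⟩ := hx₂
  set g : ℝ → ℝ := fun x => (A / x - 1) * l x with hg
  -- derivative of g
  have hgderiv : ∀ x ∈ Set.Ioo (0:ℝ) A, HasDerivAt g
      ((A * -(x^2)⁻¹) * l x + (A / x - 1) * l' x) x := by
    intro x hx
    have hx0 := hx.1
    have h1 : HasDerivAt (fun x : ℝ => A / x - 1) (A * -(x^2)⁻¹) x := by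
      simpa [div_eq_mul_inv] using
        (((hasDerivAt_inv (ne_of_gt hx0)).const_mul A).sub_const 1)
    exact h1.mul (hl x hx0)
  have hgderivneg : ∀ x ∈ Set.Ioo (0:ℝ) A,
      (A * -(x^2)⁻¹) * l x + (A / x - 1) * l' x < 0 := by
    intro x hx
    have hx0 := hx.1
    have hxA := hx.2
    have hlp := hlpos x hx0
    have hin := hinel x hx0
    have hx2 : (0:ℝ) < x ^ 2 := by positivity
    have heq : (A * -(x^2)⁻¹) * l x + (A / x - 1) * l' x
        = ((A - x) * (x * l' x) - A * l x) / x ^ 2 := by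
      field_simp
      ring
    rw [heq]
    apply div_neg_of_neg_of_pos _ hx2
    nlinarith [mul_lt_mul_of_pos_left hin (sub_pos.mpr hxA)]
  have hganti : StrictAntiOn g (Set.Ioo 0 A) := by
    apply StrictAntiOn.mono _ (le_refl (Set.Ioo 0 A))
    apply strictAntiOn_of_deriv_neg (convex_Ioo 0 A)
    · exact fun x hx => (hgderiv x hx).continuousAt.continuousWithinAt
    · intro x hx
      rw [interior_Ioo] at hx
      rw [(hgderiv x hx).deriv]
      exact hgderivneg x hx
  have hgpos : ∀ x ∈ Set.Ioo (0:ℝ) A, 0 < g x := by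
    intro x hx
    have : 1 < A / x := (one_lt_div hx.1).mpr hx.2
    exact mul_pos (by linarith) (hlpos x hx.1)
  -- from hf deduce x₁ ≤ x₂
  have hle : x₁ ≤ x₂ := by
    by_contra h
    push_neg at h
    have hg12 : g x₁ < g x₂ := hganti ⟨hx₂0, hx₂A⟩ ⟨hx₁0, hx₁A⟩ h
    have : A / g x₂ < A / g x₁ :=
      div_lt_div_of_pos_left hA (hgpos x₁ ⟨hx₁0, hx₁A⟩) hg12
    simp only [hg] at this
    linarith
  -- concavity: (x₁/x₂) * log p x₂ ≤ log p x₁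
  have hlog : (x₁ / x₂) * Real.log (p x₂) ≤ Real.log (p x₁) := by
    have ht0 : 0 ≤ x₁ / x₂ := by positivity
    have ht1 : x₁ / x₂ ≤ 1 := (div_le_one hx₂0).mpr hle
    have ha : (0:ℝ) ≤ 1 - x₁ / x₂ := by linarith
    have hsum : (1 - x₁ / x₂) + x₁ / x₂ = 1 := by ring
    have h := hconc.2 (Set.mem_Ici.mpr le_rfl) (Set.mem_Ici.mpr hx₂0.le) ha ht0 hsum
    have hx : (1 - x₁ / x₂) • (0:ℝ) + (x₁ / x₂) • x₂ = x₁ := by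
      field_simp
      rw [smul_zero, zero_add, smul_eq_mul, div_mul_cancel₀ _ hx₂0.ne']
    rw [hx] at h
    simpa [hp0, smul_eq_mul] using h
  -- compare exponents
  have hexp : (A / x₂) * Real.log (p x₂) ≤ (A / x₁) * Real.log (p x₁) := by
    have h2 := mul_le_mul_of_nonneg_left hlog (le_of_lt (div_pos hA hx₁0))
    have : (A / x₁) * ((x₁ / x₂) * Real.log (p x₂)) = (A / x₂) * Real.log (p x₂) := by
      field_simp
    linarith [this ▸ h2]
  calc p x₂ ^ (A / x₂) = Real.exp ((A / x₂) * Real.log (p x₂)) := by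
        rw [Real.rpow_def_of_pos (hppos x₂ hx₂0.le), mul_comm]
    _ ≤ Real.exp ((A / x₁) * Real.log (p x₁)) := Real.exp_le_exp.mpr hexp
    _ = p x₁ ^ (A / x₁) := by
        rw [Real.rpow_def_of_pos (hppos x₁ hx₁0.le), mul_comm]
end

section
/- Let p(x) ∈ (0,1) be fixed and r : [0,∞) → (0,∞) be log-concave. Fix x > 0 and δ ∈ (0,1), and define Π(z) = Σ_{i=1}^{z−1} δ^{i−1} p^i r(i·x) + (δ^{z−1}/(1−δ)) p^z r(z·x) for positive integers z. Then Π(z+1) − Π(z) = (δ^z/(1−δ)) p^z (p·r((z+1)x) − r(z·x)); consequently Π is unimodal in z and is maximized at z*(x) = min{ z ∈ ℕ⁺ : r(z·x)/r((z+1)·x) ≥ p }. -/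
theorem stmt_11 (p : ℝ) (hp : p ∈ Set.Ioo (0:ℝ) 1)
    (r : ℝ → ℝ) (hrpos : ∀ x ≥ 0, 0 < r x)
    (hrconc : ConcaveOn ℝ (Set.Ici 0) (fun x => Real.log (r x)))
    (x : ℝ) (hx : 0 < x)
    (δ : ℝ) (hδ : δ ∈ Set.Ioo (0:ℝ) 1)
    (Pay : ℕ → ℝ)
    (hPay : ∀ z : ℕ, Pay z =
      (∑ i ∈ Finset.range (z - 1), δ ^ i * p ^ (i + 1) * r ((i + 1) * x)) +
        δ ^ (z - 1) / (1 - δ) * p ^ z * r (z * x))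
    (zstar : ℕ) (hzstar1 : 1 ≤ zstar)
    (hzstar : p ≤ r (zstar * x) / r ((zstar + 1) * x))
    (hzstarmin : ∀ z : ℕ, 1 ≤ z → z < zstar → r (z * x) / r ((z + 1) * x) < p) :
    (∀ z : ℕ, 1 ≤ z →
      Pay (z + 1) - Pay z = δ ^ z / (1 - δ) * p ^ z * (p * r ((z + 1) * x) - r (z * x))) ∧
    (∀ z : ℕ, 1 ≤ z → z < zstar → Pay z ≤ Pay (z + 1)) ∧
    (∀ z : ℕ, zstar ≤ z → Pay (z + 1) ≤ Pay z) ∧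
    (∀ z : ℕ, 1 ≤ z → Pay z ≤ Pay zstar) := by
  obtain ⟨hp0, hp1⟩ := hp
  obtain ⟨hδ0, hδ1⟩ := hδ
  have hδ1' : (0:ℝ) < 1 - δ := by linarith
  have hrn : ∀ n : ℕ, 0 < r (n * x) := fun n => hrpos _ (by positivity)
  have hrn1 : ∀ n : ℕ, 0 < r ((n + 1) * x) := fun n => by
    have := hrn (n + 1); push_cast at this; exact this
  -- difference formula
  have h1 : ∀ z : ℕ, 1 ≤ z →
      Pay (z + 1) - Pay z = δ ^ z / (1 - δ) * p ^ z * (p * r ((z + 1) * x) - r (z * x)) := by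
    intro z hz
    obtain ⟨m, rfl⟩ : ∃ m, z = m + 1 := ⟨z - 1, by omega⟩
    rw [hPay, hPay]
    simp only [Nat.add_sub_cancel, Finset.sum_range_succ]
    push_cast
    generalize ∑ i ∈ Finset.range m, δ ^ i * p ^ (i + 1) * r ((↑i + 1) * x) = S
    field_simp
    ring
  -- increasing before zstar
  have h2 : ∀ z : ℕ, 1 ≤ z → z < zstar → Pay z ≤ Pay (z + 1) := by
    intro z hz hlt
    have hr := hzstarmin z hz hlt
    have hb := hrn1 z
    have hlt2 : r (z * x) < p * r ((z + 1) * x) := by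
      rw [div_lt_iff₀ hb] at hr; linarith
    have hd := h1 z hz
    have hC : 0 < δ ^ z / (1 - δ) * p ^ z := by positivity
    have := mul_pos hC (sub_pos.2 hlt2)
    linarith
  -- log-concavity: adjacent log-ratio is monotone
  have mid : ∀ n : ℕ, Real.log (r (n * x)) + Real.log (r ((n + 2) * x)) ≤
      2 * Real.log (r ((n + 1) * x)) := by
    intro n
    have hmem1 : (n : ℝ) * x ∈ Set.Ici (0:ℝ) := Set.mem_Ici.2 (by positivity)
    have hmem2 : ((n : ℝ) + 2) * x ∈ Set.Ici (0:ℝ) := Set.mem_Ici.2 (by positivity)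
    have h := hrconc.2 hmem1 hmem2 (by norm_num : (0:ℝ) ≤ 1/2)
      (by norm_num : (0:ℝ) ≤ 1/2) (by norm_num)
    have e : (1/2 : ℝ) • ((n:ℝ) * x) + (1/2 : ℝ) • (((n:ℝ) + 2) * x) = ((n:ℝ) + 1) * x := by
      simp only [smul_eq_mul]; ring
    rw [e] at h
    simp only [smul_eq_mul] at h
    linarith
  have dmono : ∀ m n : ℕ, m ≤ n →
      Real.log (r (m * x)) - Real.log (r ((m + 1) * x)) ≤
      Real.log (r (n * x)) - Real.log (r ((n + 1) * x)) := by
    intro m n hmn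
    induction n with
    | zero => interval_cases m; exact le_rfl
    | succ n ih =>
      rcases Nat.lt_or_ge m (n + 1) with h | h
      · have hih := ih (by omega)
        have h2' := mid n
        have e : ((n:ℝ) + 1 + 1) * x = ((n:ℝ) + 2) * x := by ring
        push_cast
        rw [e]
        linarith
      · have : m = n + 1 := by omega
        subst this
        exact le_rfl
  have key : ∀ z : ℕ, zstar ≤ z → p * r ((z + 1) * x) ≤ r (z * x) := by
    intro z hz
    have ha := hrn zstar
    have hb := hrn1 zstar
    have hc := hrn z
    have hd := hrn1 z
    have hlog : Real.log p ≤ Real.log (r (zstar * x)) - Real.log (r ((zstar + 1) * x)) := by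
      have := Real.log_le_log hp0 hzstar
      rwa [Real.log_div (ne_of_gt ha) (ne_of_gt hb)] at this
    have hlog2 := dmono zstar z hz
    have hle : Real.log p ≤ Real.log (r (z * x)) - Real.log (r ((z + 1) * x)) := by linarith
    have hexp := Real.exp_le_exp.2 hle
    rw [Real.exp_log hp0, Real.exp_sub, Real.exp_log hc, Real.exp_log hd] at hexp
    rw [div_eq_mul_inv] at hexp
    calc p * r ((z + 1) * x) ≤ (r (z * x) * (r ((z + 1) * x))⁻¹) * r ((z + 1) * x) := by
          apply mul_le_mul_of_nonneg_right hexp (le_of_lt hd)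
      _ = r (z * x) := by rw [mul_assoc, inv_mul_cancel₀ (ne_of_gt hd), mul_one]
  -- decreasing after zstar
  have h3 : ∀ z : ℕ, zstar ≤ z → Pay (z + 1) ≤ Pay z := by
    intro z hz
    have hd := h1 z (le_trans hzstar1 hz)
    have hk := key z hz
    have hC : 0 ≤ δ ^ z / (1 - δ) * p ^ z := by positivity
    have := mul_nonpos_of_nonneg_of_nonpos hC (by linarith : p * r ((z + 1) * x) - r (z * x) ≤ 0)
    linarith
  refine ⟨h1, h2, h3, ?_⟩
  -- maximized at zstar
  have up : ∀ b : ℕ, ∀ a : ℕ, 1 ≤ a → a ≤ b → b ≤ zstar → Pay a ≤ Pay b := by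
    intro b
    induction b with
    | zero => intro a ha hab _; omega
    | succ b ih =>
      intro a ha hab hb
      rcases Nat.lt_or_ge a (b + 1) with h | h
      · have h1b : 1 ≤ b := by omega
        calc Pay a ≤ Pay b := ih a ha (by omega) (by omega)
          _ ≤ Pay (b + 1) := h2 b h1b (by omega)
      · have : a = b + 1 := by omega
        subst this; exact le_rfl
  have down : ∀ b : ℕ, ∀ a : ℕ, zstar ≤ a → a ≤ b → Pay b ≤ Pay a := by
    intro b
    induction b with
    | zero => intro a ha hab; have : a = 0 := by omega
              subst this; exact le_rfl
    | succ b ih =>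
      intro a ha hab
      rcases Nat.lt_or_ge a (b + 1) with h | h
      · calc Pay (b + 1) ≤ Pay b := h3 b (by omega)
          _ ≤ Pay a := ih a ha (by omega)
      · have : a = b + 1 := by omega
        subst this; exact le_rfl
  intro z hz
  rcases Nat.le_total z zstar with h | h
  · exact up zstar z hz h le_rfl
  · exact down z zstar le_rfl h
end
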